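/- Let E = F ⊕ G be a Banach space direct sum of closed subspaces F and G. If both F and G have the SHAI property, then E has the SHAI property. -/

import Mathlib

universe u

/-- A normed space `X` has the SHAI property if for every nonzero complex Banach space `Y`,
every surjective algebra homomorphism `B(X) → B(Y)` is injective. -/
def HasSHAI (X : Type*) [NormedAddCommGroup X] [NormedSpace ℂ X] : Prop :=
  ∀ (Y : Type u) [NormedAddCommGroup Y] [NormedSpace ℂ Y] [CompleteSpace Y],
    Nontrivial Y →
      ∀ ψ : (X →L[ℂ] X) →ₐ[ℂ] (Y →L[ℂ] Y),
        Function.Surjective ψ → Function.Injective ψ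

open ContinuousLinearMap in
set_option maxHeartbeats 1000000 in
lemma corner_inj {E : Type*} [NormedAddCommGroup E] [NormedSpace ℂ E]
    {Y : Type u} [NormedAddCommGroup Y] [NormedSpace ℂ Y] [CompleteSpace Y]
    (W : Submodule ℂ E) (ρ : E →L[ℂ] W) (hρ : ∀ w : W, ρ (w : E) = w)
    (hW : HasSHAI.{u} W)
    (ψ : (E →L[ℂ] E) →ₐ[ℂ] (Y →L[ℂ] Y)) (hψ : Function.Surjective ψ)
    (hp : ψ (W.subtypeL ∘L ρ) ≠ 0)
    (S : W →L[ℂ] W) (hS : ψ (W.subtypeL ∘L S ∘L ρ) = 0) : S = 0 := by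
  set ι : W →L[ℂ] E := W.subtypeL with hιdef
  set P : E →L[ℂ] E := ι ∘L ρ with hPdef
  set p : Y →L[ℂ] Y := ψ P with hpdef
  have hPP : P * P = P := by
    ext x
    simp [hPdef, hιdef, ContinuousLinearMap.mul_apply, hρ]
  have hpp : p * p = p := by
    rw [hpdef, ← map_mul, hPP]
  set Y₁ : Submodule ℂ Y := LinearMap.ker ((1 - p : Y →L[ℂ] Y) : Y →ₗ[ℂ] Y) with hY₁
  have hmem : ∀ y : Y, y ∈ Y₁ ↔ p y = y := by
    intro y
    rw [hY₁]
    simp only [LinearMap.mem_ker, ContinuousLinearMap.coe_coe, ContinuousLinearMap.sub_apply,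
      ContinuousLinearMap.one_apply, sub_eq_zero]
    exact eq_comm
  have hpmem : ∀ y : Y, p y ∈ Y₁ := fun y =>
    (hmem _).2 (by simpa [ContinuousLinearMap.mul_apply] using DFunLike.congr_fun hpp y)
  haveI : CompleteSpace Y₁ := (ContinuousLinearMap.isClosed_ker (1 - p)).completeSpace_coe
  haveI hnt : Nontrivial Y₁ := by
    obtain ⟨y, hy⟩ : ∃ y, p y ≠ 0 := by
      by_contra h
      push_neg at h
      exact hp (by ext y; simpa using h y)
    exact nontrivial_of_ne ⟨p y, hpmem y⟩ 0
      (fun h => hy (by simpa using congrArg Subtype.val h))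
  set ι₁ : Y₁ →L[ℂ] Y := Y₁.subtypeL with hι₁def
  set π₁ : Y →L[ℂ] Y₁ := p.codRestrict Y₁ hpmem with hπ₁def
  have hpw : ∀ w : Y₁, p (w : Y) = w := fun w => (hmem _).1 w.2
  have hπι : ∀ w : Y₁, π₁ (w : Y) = w := fun w =>
    Subtype.ext (by simp [hπ₁def, hpw w])
  have hπcoe : ∀ z : Y, (π₁ z : Y) = p z := fun z => by simp [hπ₁def]
  have hmul : ∀ S₁ S₂ : W →L[ℂ] W,
      ψ (ι ∘L S₁ ∘L ρ) * (p * ψ (ι ∘L S₂ ∘L ρ)) = ψ (ι ∘L (S₁ ∘L S₂) ∘L ρ) := by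
    intro S₁ S₂
    rw [hpdef, ← map_mul, ← map_mul]
    congr 1
    ext x
    simp [hPdef, hιdef, ContinuousLinearMap.mul_apply, hρ]
  let Φ : (W →L[ℂ] W) →ₐ[ℂ] (Y₁ →L[ℂ] Y₁) :=
    { toFun := fun S => π₁ ∘L ψ (ι ∘L S ∘L ρ) ∘L ι₁
      map_one' := by
        have e : (1 : W →L[ℂ] W).comp ρ = ρ := by ext x; simp
        ext w
        simp [e, ← hPdef, ← hpdef, hι₁def, Submodule.subtypeL_apply, hpw, hπι, hπcoe]
      map_mul' := by
        intro S₁ S₂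
        have e : (S₁ * S₂ : W →L[ℂ] W) = S₁ ∘L S₂ := rfl
        ext w
        have h2 := DFunLike.congr_fun (hmul S₁ S₂) ((w : Y))
        simp only [ContinuousLinearMap.mul_apply] at h2
        simp only [ContinuousLinearMap.mul_apply, ContinuousLinearMap.comp_apply,
          hπcoe, hι₁def, Submodule.subtypeL_apply]
        rw [e]
        exact (congrArg p h2).symm
      map_zero' := by
        ext w
        simp
      map_add' := by
        intro S₁ S₂
        have e : ι ∘L (S₁ + S₂) ∘L ρ = ι ∘L S₁ ∘L ρ + ι ∘L S₂ ∘L ρ := by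
          ext x; simp
        ext w
        simp [e, map_add]
      commutes' := by
        intro c
        have e : (1 : W →L[ℂ] W).comp ρ = ρ := by ext x; simp
        ext w
        simp [Algebra.algebraMap_eq_smul_one, e, map_smul, ← hPdef, ← hpdef,
          hι₁def, Submodule.subtypeL_apply, hpw, hπι, hπcoe] }
  have hΦapp : ∀ S' : W →L[ℂ] W, Φ S' = π₁ ∘L ψ (ι ∘L S' ∘L ρ) ∘L ι₁ := fun _ => rfl
  have hΦs : Function.Surjective Φ := by
    intro B
    obtain ⟨T, hT⟩ := hψ (ι₁ ∘L B ∘L π₁)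
    refine ⟨ρ ∘L T ∘L ι, ?_⟩
    have e : ι ∘L (ρ ∘L T ∘L ι) ∘L ρ = P * T * P := by
      ext x; simp [hPdef, ContinuousLinearMap.mul_apply]
    rw [hΦapp, e, map_mul, map_mul, hT, ← hpdef]
    ext w
    simp [ContinuousLinearMap.mul_apply, hι₁def, Submodule.subtypeL_apply, hpw, hπι, hπcoe]
  have hΦi : Function.Injective Φ := hW Y₁ hnt Φ hΦs
  apply hΦi
  rw [map_zero, hΦapp, hS]
  ext w
  simp

open ContinuousLinearMap in
set_option maxHeartbeats 1000000 in
lemma ker_diag {E : Type*} [NormedAddCommGroup E] [NormedSpace ℂ E] [CompleteSpace E]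
    (F G : Submodule ℂ E) (hFc : IsClosed (F : Set E)) (hGc : IsClosed (G : Set E))
    (hcompl : IsCompl F G) (hF : HasSHAI.{u} F) (hG : HasSHAI.{u} G)
    {Y : Type u} [NormedAddCommGroup Y] [NormedSpace ℂ Y] [CompleteSpace Y]
    (hY : Nontrivial Y)
    (ψ : (E →L[ℂ] E) →ₐ[ℂ] (Y →L[ℂ] Y)) (hψ : Function.Surjective ψ)
    (T : E →L[ℂ] E) (hT : ψ T = 0) :
    ∀ x : E, F.linearProjOfClosedCompl G hcompl hFc hGc
      (T (F.linearProjOfClosedCompl G hcompl hFc hGc x : E)) = 0 := by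
  set ρ : E →L[ℂ] F := F.linearProjOfClosedCompl G hcompl hFc hGc with hρdef
  have hρ : ∀ w : F, ρ (w : E) = w := fun w => by
    rw [hρdef]
    simp [Submodule.coe_continuous_linearProjOfClosedCompl',
      Submodule.linearProjOfIsCompl_apply_left]
  set ι : F →L[ℂ] E := F.subtypeL with hιdef
  set P : E →L[ℂ] E := ι ∘L ρ with hPdef
  by_cases hp0 : ψ P = 0
  · -- degenerate case
    by_cases hFbot : F = ⊥
    · intro x
      have h3 : ∀ z : E, z ∈ F → z = 0 := fun z hz => by
        rw [hFbot] at hz; simpa using hz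
      refine Subtype.ext ?_
      simpa using h3 _ (ρ (T ((ρ x : E)))).2
    · exfalso
      obtain ⟨x0, hx0F, hx0⟩ := Submodule.exists_mem_ne_zero_of_ne_bot hFbot
      have hone_ne : (1 : Y →L[ℂ] Y) ≠ 0 := by
        intro h10
        obtain ⟨y, hy⟩ := exists_ne (0 : Y)
        exact hy (by simpa using DFunLike.congr_fun h10 y)
      by_cases hGbot : G = ⊥
      · -- then P = 1, contradiction with ψ P = 0
        have hP1 : P = 1 := by
          ext x
          have h : (F.projectionOnto G hcompl x : E) + (G.projectionOnto F hcompl.symm x : E) = x :=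
            Submodule.projection_add_projection_eq_self hcompl x
          have h3 : ∀ z : E, z ∈ G → z = 0 := fun z hz => by
            rw [hGbot] at hz; simpa using hz
          have h2 : ((G.projectionOnto F hcompl.symm x : E)) = 0 :=
            h3 _ (G.projectionOnto F hcompl.symm x).2
          rw [h2, add_zero] at h
          simpa [hPdef, hιdef, hρdef,
            Submodule.coe_continuous_linearProjOfClosedCompl'] using h
        rw [hP1, map_one] at hp0
        exact hone_ne hp0
      · obtain ⟨g0, hg0G, hg0⟩ := Submodule.exists_mem_ne_zero_of_ne_bot hGbot
        set ρG : E →L[ℂ] G := G.linearProjOfClosedCompl F hcompl.symm hGc hFc with hρGdef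
        have hρG : ∀ w : G, ρG (w : E) = w := fun w => by
          rw [hρGdef]
          simp [Submodule.coe_continuous_linearProjOfClosedCompl',
            Submodule.linearProjOfIsCompl_apply_left]
        have hQsum : ∀ x : E, (ρ x : E) + (ρG x : E) = x := fun x => by
          rw [hρdef, hρGdef]
          simp only [Submodule.coe_continuous_linearProjOfClosedCompl']
          exact Submodule.projection_add_projection_eq_self hcompl x
        have hQ1 : ψ (G.subtypeL ∘L ρG) ≠ 0 := by
          have hQ : G.subtypeL ∘L ρG = 1 - P := by
            ext x
            have := hQsum x
            simp only [ContinuousLinearMap.comp_apply, ContinuousLinearMap.sub_apply,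
              ContinuousLinearMap.one_apply, hPdef, hιdef, Submodule.subtypeL_apply]
            exact eq_sub_of_add_eq (by rw [add_comm]; exact this)
          rw [hQ, map_sub, map_one, hp0, sub_zero]
          exact hone_ne
        -- rank one operators
        set x0' : F := ⟨x0, hx0F⟩ with hx0'def
        have hx0' : x0' ≠ 0 := fun h => hx0 (by simpa [hx0'def] using congrArg Subtype.val h)
        set g0' : G := ⟨g0, hg0G⟩ with hg0'def
        have hg0' : g0' ≠ 0 := fun h => hg0 (by simpa [hg0'def] using congrArg Subtype.val h)
        obtain ⟨f, _, hf⟩ := exists_dual_vector ℂ x0' (norm_ne_zero_iff.2 hx0')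
        obtain ⟨h, _, hh⟩ := exists_dual_vector ℂ g0' (norm_ne_zero_iff.2 hg0')
        set f' : F →L[ℂ] ℂ := ((‖x0'‖ : ℂ))⁻¹ • f with hf'def
        have hf' : f' x0' = 1 := by
          rw [hf'def]
          simp only [ContinuousLinearMap.smul_apply, hf, smul_eq_mul]
          have h0 : ((‖x0'‖ : ℝ) : ℂ) ≠ 0 := by
            exact_mod_cast norm_ne_zero_iff.2 hx0'
          exact inv_mul_cancel₀ h0
        set h' : G →L[ℂ] ℂ := ((‖g0'‖ : ℂ))⁻¹ • h with hh'def
        have hh' : h' g0' = 1 := by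
          rw [hh'def]
          simp only [ContinuousLinearMap.smul_apply, hh, smul_eq_mul]
          have h0 : ((‖g0'‖ : ℝ) : ℂ) ≠ 0 := by
            exact_mod_cast norm_ne_zero_iff.2 hg0'
          exact inv_mul_cancel₀ h0
        set u : F →L[ℂ] G := f'.smulRight g0' with hudef
        set v : G →L[ℂ] F := h'.smulRight x0' with hvdef
        have hS0 : ψ (G.subtypeL ∘L (u ∘L v) ∘L ρG) = 0 := by
          have e : G.subtypeL ∘L (u ∘L v) ∘L ρG
              = ((G.subtypeL ∘L u ∘L ρ) * P) * (F.subtypeL ∘L v ∘L ρG) := by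
            ext x
            simp [ContinuousLinearMap.mul_apply, hPdef, hιdef, hρ]
          rw [e, map_mul, map_mul, hp0, mul_zero, zero_mul]
        have huv := corner_inj G ρG hρG hG ψ hψ hQ1 (u ∘L v) hS0
        have happ := DFunLike.congr_fun huv g0'
        simp only [ContinuousLinearMap.comp_apply, hudef, hvdef,
          ContinuousLinearMap.smulRight_apply, hh', hf', one_smul,
          ContinuousLinearMap.zero_apply] at happ
        exact hg0' happ
  · -- main case: use the corner of F
    have key := corner_inj F ρ hρ hF ψ hψ hp0 (ρ ∘L T ∘L ι) ?_
    · intro x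
      have h2 := DFunLike.congr_fun key (ρ x)
      simpa [ContinuousLinearMap.comp_apply, hιdef] using h2
    · have e : ι ∘L (ρ ∘L T ∘L ι) ∘L ρ = (P * T) * P := by
        ext x
        simp [ContinuousLinearMap.mul_apply, hPdef, hιdef, hρ]
      rw [hιdef] at e
      rw [e, map_mul, map_mul, hT, mul_zero, zero_mul]

open ContinuousLinearMap in
set_option maxHeartbeats 1000000 in
/-- If `E = F ⊕ G` is a Banach space direct sum of closed subspaces `F` and
`G`, and both `F` and `G` have the SHAI property, then so does `E`. -/
theorem shai_of_direct_sum
    {E : Type*} [NormedAddCommGroup E] [NormedSpace ℂ E] [CompleteSpace E]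
    (F G : Submodule ℂ E)
    (hFc : IsClosed (F : Set E)) (hGc : IsClosed (G : Set E))
    (hcompl : IsCompl F G)
    (hF : HasSHAI.{u} F) (hG : HasSHAI.{u} G) :
    HasSHAI.{u} E := by
  intro Y _ _ _ hY ψ hψ
  rw [injective_iff_map_eq_zero]
  intro T hT
  by_contra hT0
  obtain ⟨x, hx⟩ : ∃ x, T x ≠ 0 := by
    by_contra hcon
    push_neg at hcon
    exact hT0 (by ext z; simpa using hcon z)
  set y := T x with hydef
  obtain ⟨g, _, hg⟩ := exists_dual_vector ℂ y (norm_ne_zero_iff.2 hx)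
  set A : E →L[ℂ] E := (((‖y‖ : ℝ) : ℂ)⁻¹ • g).smulRight x with hAdef
  have hAy : A y = x := by
    rw [hAdef]
    have hg' : g y = ((‖y‖ : ℝ) : ℂ) := by exact_mod_cast hg
    simp only [ContinuousLinearMap.smulRight_apply, ContinuousLinearMap.smul_apply, hg',
      smul_eq_mul]
    have h0 : ((‖y‖ : ℝ) : ℂ) ≠ 0 := by exact_mod_cast norm_ne_zero_iff.2 hx
    rw [inv_mul_cancel₀ h0, one_smul]
  set S : E →L[ℂ] E := T ∘L A with hSdef
  have hSy : S y = y := by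
    rw [hSdef]
    simp only [ContinuousLinearMap.comp_apply, hAy, ← hydef]
  have hψS : ψ S = 0 := by
    have e : S = T * A := rfl
    rw [e, map_mul, hT, zero_mul]
  have hψSS : ψ (S * S) = 0 := by rw [map_mul, hψS, zero_mul]
  set ρF : E →L[ℂ] F := F.linearProjOfClosedCompl G hcompl hFc hGc with hρFdef
  set ρG : E →L[ℂ] G := G.linearProjOfClosedCompl F hcompl.symm hGc hFc with hρGdef
  have dFS : ∀ z : E, (ρF (S ((ρF z : E))) : E) = 0 := fun z => by
    have := ker_diag F G hFc hGc hcompl hF hG hY ψ hψ S hψS z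
    rw [← hρFdef] at this
    rw [this]
    rfl
  have dGS : ∀ z : E, (ρG (S ((ρG z : E))) : E) = 0 := fun z => by
    have := ker_diag G F hGc hFc hcompl.symm hG hF hY ψ hψ S hψS z
    rw [← hρGdef] at this
    rw [this]
    rfl
  have dFSS : ∀ z : E, (ρF (S (S ((ρF z : E)))) : E) = 0 := fun z => by
    have := ker_diag F G hFc hGc hcompl hF hG hY ψ hψ (S * S) hψSS z
    rw [← hρFdef] at this
    simp only [ContinuousLinearMap.mul_apply] at this
    rw [this]
    rfl
  have dGSS : ∀ z : E, (ρG (S (S ((ρG z : E)))) : E) = 0 := fun z => by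
    have := ker_diag G F hGc hFc hcompl.symm hG hF hY ψ hψ (S * S) hψSS z
    rw [← hρGdef] at this
    simp only [ContinuousLinearMap.mul_apply] at this
    rw [this]
    rfl
  have hsum : ∀ z : E, (ρF z : E) + (ρG z : E) = z := fun z => by
    rw [hρFdef, hρGdef]
    simp only [Submodule.coe_continuous_linearProjOfClosedCompl']
    exact Submodule.projection_add_projection_eq_self hcompl z
  -- decomposition of any vector
  have hdec : ∀ z : E, z = (ρF z : E) + (ρG z : E) := fun z => (hsum z).symm
  have hSS0 : ∀ z : E, S (S z) = 0 := by
    intro z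
    have e1 : S (S z) = S (S ((ρF z : E))) + S (S ((ρG z : E))) := by
      conv_lhs => rw [hdec z]
      rw [map_add, map_add]
    -- first term
    have t1 : S (S ((ρF z : E))) = 0 := by
      have w1 : S ((ρF z : E)) = (ρG (S ((ρF z : E))) : E) := by
        conv_lhs => rw [hdec (S ((ρF z : E)))]
        rw [dFS z, zero_add]
      calc S (S ((ρF z : E)))
          = (ρF (S (S ((ρF z : E)))) : E) + (ρG (S (S ((ρF z : E)))) : E) := (hsum _).symm
        _ = 0 := by
            rw [dFSS z]
            have : (ρG (S (S ((ρF z : E)))) : E) = 0 := by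
              conv_lhs => rw [show S (S ((ρF z : E))) = S ((ρG (S ((ρF z : E))) : E)) from by
                rw [← w1]]
              exact dGS _
            rw [this, add_zero]
    -- second term
    have t2 : S (S ((ρG z : E))) = 0 := by
      have w2 : S ((ρG z : E)) = (ρF (S ((ρG z : E))) : E) := by
        conv_lhs => rw [hdec (S ((ρG z : E)))]
        rw [dGS z, add_zero]
      calc S (S ((ρG z : E)))
          = (ρF (S (S ((ρG z : E)))) : E) + (ρG (S (S ((ρG z : E)))) : E) := (hsum _).symm
        _ = 0 := by
            rw [dGSS z]
            have : (ρF (S (S ((ρG z : E)))) : E) = 0 := by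
              conv_lhs => rw [show S (S ((ρG z : E))) = S ((ρF (S ((ρG z : E))) : E)) from by
                rw [← w2]]
              exact dFS _
            rw [this, zero_add]
    rw [e1, t1, t2, add_zero]
  have hy0 : y = 0 := by
    have h1 : S (S y) = y := by rw [hSy, hSy]
    rw [← h1, hSS0 y]
  exact hx (hydef ▸ hy0)
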